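/- Let A and Â be symmetric d×d real matrices with A positive semidefinite, and let μ, μ̂, x ∈ ℝ^d. Then |(x − μ̂)ᵀ Â (x − μ̂) − (x − μ)ᵀ A (x − μ)| ≤ ‖Â − A‖_F · ‖x − μ̂‖² + λ_max(A) · ‖μ̂ − μ‖ · (2‖x‖ + ‖μ̂‖ + ‖μ‖), where λ_max(A) is the largest eigenvalue of A and ‖·‖_F is the Frobenius norm. -/

import Mathlib

open Matrix Real
open scoped BigOperators

noncomputable section

/-- The Frobenius norm of a real matrix. -/
def frobNorm {d : ℕ} (A : Matrix (Fin d) (Fin d) ℝ) : ℝ :=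
  Real.sqrt (∑ i, ∑ j, (A i j) ^ 2)

lemma abs_sum_mul_le' {ι : Type*} [Fintype ι] (f g : ι → ℝ) :
    |∑ i, f i * g i| ≤ Real.sqrt (∑ i, f i ^ 2) * Real.sqrt (∑ i, g i ^ 2) := by
  calc |∑ i, f i * g i| ≤ ∑ i, |f i * g i| := Finset.abs_sum_le_sum_abs _ _
    _ = ∑ i, |f i| * |g i| := by simp [abs_mul]
    _ ≤ Real.sqrt (∑ i, |f i| ^ 2) * Real.sqrt (∑ i, |g i| ^ 2) :=
        Real.sum_mul_le_sqrt_mul_sqrt _ _ _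
    _ = Real.sqrt (∑ i, f i ^ 2) * Real.sqrt (∑ i, g i ^ 2) := by simp [sq_abs]

lemma frob_bound {d : ℕ} (M : Matrix (Fin d) (Fin d) ℝ) (u : EuclideanSpace ℝ (Fin d)) :
    |u ⬝ᵥ M.mulVec u| ≤ frobNorm M * ‖u‖ ^ 2 := by
  have h1 : u ⬝ᵥ M.mulVec u = ∑ p : Fin d × Fin d, M p.1 p.2 * (u p.1 * u p.2) := by
    rw [Fintype.sum_prod_type]
    simp only [dotProduct, mulVec, Finset.mul_sum]
    refine Finset.sum_congr rfl fun i _ => Finset.sum_congr rfl fun j _ => by ring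
  have h2 := abs_sum_mul_le' (fun p : Fin d × Fin d => M p.1 p.2)
      (fun p : Fin d × Fin d => u p.1 * u p.2)
  rw [h1]
  refine h2.trans (le_of_eq ?_)
  have hnorm : ‖u‖ = Real.sqrt (∑ i, u i ^ 2) := by
    rw [EuclideanSpace.norm_eq]
    simp [Real.norm_eq_abs, sq_abs]
  have hf : (∑ p : Fin d × Fin d, (M p.1 p.2) ^ 2) = ∑ i, ∑ j, (M i j) ^ 2 := by
    rw [Fintype.sum_prod_type]
  have hg : (∑ p : Fin d × Fin d, (u p.1 * u p.2) ^ 2)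
      = (∑ i, u i ^ 2) * (∑ j, u j ^ 2) := by
    rw [Fintype.sum_prod_type, Finset.sum_mul_sum]
    refine Finset.sum_congr rfl fun i _ => Finset.sum_congr rfl fun j _ => by ring
  rw [hf, hg, frobNorm, hnorm, Real.sqrt_mul (by positivity), ← Real.sqrt_mul_self
    (by positivity : (0:ℝ) ≤ Real.sqrt (∑ i, u i ^ 2))]
  ring

lemma dot_eq_sum_repr {d : ℕ} (b : OrthonormalBasis (Fin d) ℝ (EuclideanSpace ℝ (Fin d)))
    (a c : EuclideanSpace ℝ (Fin d)) :
    a ⬝ᵥ (c : Fin d → ℝ) = ∑ i, b.repr a i * b.repr c i := by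
  calc a ⬝ᵥ (c : Fin d → ℝ) = (inner ℝ a c : ℝ) := by
        rw [EuclideanSpace.inner_eq_star_dotProduct, star_trivial, dotProduct_comm]
    _ = (inner ℝ (b.repr a) (b.repr c) : ℝ) := (b.repr.inner_map_map a c).symm
    _ = ∑ i, b.repr a i * b.repr c i := by
        rw [EuclideanSpace.inner_eq_star_dotProduct, star_trivial, dotProduct_comm]; rfl

lemma eig_bound {d : ℕ} {A : Matrix (Fin d) (Fin d) ℝ} (hA_symm : A.IsSymm)
    (hA : A.PosSemidef) (w v : EuclideanSpace ℝ (Fin d)) :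
    |w ⬝ᵥ A.mulVec v| ≤ (⨆ i, hA.1.eigenvalues i) * (‖w‖ * ‖v‖) := by
  classical
  set b := hA.1.eigenvectorBasis with hbdef
  set lam := hA.1.eigenvalues with hlamdef
  have hL0 : 0 ≤ ⨆ i, lam i := Real.iSup_nonneg fun i => hA.eigenvalues_nonneg i
  have hrepr : ∀ (y : EuclideanSpace ℝ (Fin d)) (i : Fin d),
      b.repr (WithLp.toLp 2 (A.mulVec y) : EuclideanSpace ℝ (Fin d)) i = lam i * b.repr y i := by
    intro y i
    have key : (b i : Fin d → ℝ) ⬝ᵥ (A.mulVec y) = lam i * ((b i : Fin d → ℝ) ⬝ᵥ y) := by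
      calc (b i : Fin d → ℝ) ⬝ᵥ (A.mulVec y)
          = ((b i : Fin d → ℝ) ᵥ* A) ⬝ᵥ y := Matrix.dotProduct_mulVec _ _ _
        _ = (Aᵀ *ᵥ (b i : Fin d → ℝ)) ⬝ᵥ y := by rw [Matrix.mulVec_transpose]
        _ = (A *ᵥ (b i : Fin d → ℝ)) ⬝ᵥ y := by rw [hA_symm]
        _ = (lam i • (b i : Fin d → ℝ)) ⬝ᵥ y := by
              rw [show A *ᵥ (b i : Fin d → ℝ) = lam i • (b i : Fin d → ℝ) from
                hA.1.mulVec_eigenvectorBasis i]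
        _ = lam i * ((b i : Fin d → ℝ) ⬝ᵥ y) := by
              rw [smul_dotProduct, smul_eq_mul]
    rw [b.repr_apply_apply, b.repr_apply_apply, EuclideanSpace.inner_eq_star_dotProduct,
      EuclideanSpace.inner_eq_star_dotProduct, star_trivial, dotProduct_comm,
      dotProduct_comm y.ofLp]
    exact key
  have hsum : w ⬝ᵥ A.mulVec v = ∑ i, lam i * (b.repr w i * b.repr v i) := by
    rw [dot_eq_sum_repr b w (WithLp.toLp 2 (A.mulVec v) : EuclideanSpace ℝ (Fin d))]
    refine Finset.sum_congr rfl fun i _ => ?_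
    rw [hrepr v i]; ring
  have hnw : Real.sqrt (∑ i, (b.repr w i) ^ 2) = ‖w‖ := by
    rw [← b.repr.norm_map w, EuclideanSpace.norm_eq]
    simp [Real.norm_eq_abs, sq_abs]
  have hnv : Real.sqrt (∑ i, (b.repr v i) ^ 2) = ‖v‖ := by
    rw [← b.repr.norm_map v, EuclideanSpace.norm_eq]
    simp [Real.norm_eq_abs, sq_abs]
  rw [hsum]
  calc |∑ i, lam i * (b.repr w i * b.repr v i)|
      ≤ ∑ i, |lam i * (b.repr w i * b.repr v i)| := Finset.abs_sum_le_sum_abs _ _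
    _ = ∑ i, lam i * (|b.repr w i| * |b.repr v i|) := by
        refine Finset.sum_congr rfl fun i _ => ?_
        rw [abs_mul, abs_mul, abs_of_nonneg (hA.eigenvalues_nonneg i)]
    _ ≤ ∑ i, (⨆ j, lam j) * (|b.repr w i| * |b.repr v i|) := by
        refine Finset.sum_le_sum fun i _ => ?_
        exact mul_le_mul_of_nonneg_right
          (le_ciSup (Set.Finite.bddAbove (Set.finite_range lam)) i) (by positivity)
    _ = (⨆ j, lam j) * ∑ i, |b.repr w i| * |b.repr v i| := by rw [Finset.mul_sum]
    _ ≤ (⨆ j, lam j) * (‖w‖ * ‖v‖) := by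
        refine mul_le_mul_of_nonneg_left ?_ hL0
        calc ∑ i, |b.repr w i| * |b.repr v i|
            ≤ Real.sqrt (∑ i, |b.repr w i| ^ 2) * Real.sqrt (∑ i, |b.repr v i| ^ 2) :=
              Real.sum_mul_le_sqrt_mul_sqrt _ _ _
          _ = ‖w‖ * ‖v‖ := by rw [show (∑ i, |b.repr w i| ^ 2) = ∑ i, (b.repr w i) ^ 2 by
                simp [sq_abs], show (∑ i, |b.repr v i| ^ 2) = ∑ i, (b.repr v i) ^ 2 by
                simp [sq_abs], hnw, hnv]

lemma split2 {d : ℕ} (A Ahat : Matrix (Fin d) (Fin d) ℝ) (u v δ : Fin d → ℝ)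
    (h : u - v = δ) :
    u ⬝ᵥ Ahat.mulVec u - v ⬝ᵥ A.mulVec v
      = u ⬝ᵥ (Ahat - A).mulVec u + (δ ⬝ᵥ A.mulVec u + v ⬝ᵥ A.mulVec δ) := by
  subst h
  rw [Matrix.sub_mulVec, dotProduct_sub, sub_dotProduct, Matrix.mulVec_sub, dotProduct_sub]
  ring

/-- For symmetric `d×d` matrices `A` (positive semidefinite) and `Â`,
and vectors `μ, μ̂, x ∈ ℝ^d`,
`|(x − μ̂)ᵀ Â (x − μ̂) − (x − μ)ᵀ A (x − μ)|
  ≤ ‖Â − A‖_F ⬝ ‖x − μ̂‖² + λ_max(A) ⬝ ‖μ̂ − μ‖ ⬝ (2‖x‖ + ‖μ̂‖ + ‖μ‖)`. -/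
theorem quadratic_form_perturbation_bound
    (d : ℕ) (A Ahat : Matrix (Fin d) (Fin d) ℝ)
    (hA_symm : A.IsSymm) (hAhat_symm : Ahat.IsSymm)
    (hA : A.PosSemidef)
    (μ muHat x : EuclideanSpace ℝ (Fin d)) :
    |(x - muHat) ⬝ᵥ Ahat.mulVec (x - muHat) - (x - μ) ⬝ᵥ A.mulVec (x - μ)|
      ≤ frobNorm (Ahat - A) * ‖x - muHat‖ ^ 2
        + (⨆ i, hA.1.eigenvalues i) * ‖muHat - μ‖ * (2 * ‖x‖ + ‖muHat‖ + ‖μ‖) := by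
  classical
  set L := ⨆ i, hA.1.eigenvalues i with hLdef
  have hL0 : 0 ≤ L := Real.iSup_nonneg fun i => hA.eigenvalues_nonneg i
  have h1 := frob_bound (Ahat - A) (x - muHat)
  have h2 := eig_bound hA_symm hA (μ - muHat) (x - muHat)
  have h3 := eig_bound hA_symm hA (x - μ) (μ - muHat)
  have e1 : ‖μ - muHat‖ = ‖muHat - μ‖ := norm_sub_rev _ _
  rw [e1] at h2
  rw [show (x - μ) ⬝ᵥ A.mulVec ((μ - muHat : EuclideanSpace ℝ (Fin d)) : Fin d → ℝ)
      = (μ - muHat) ⬝ᵥ A.mulVec (x - μ) from ?_] at h3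
  · calc |(x - muHat) ⬝ᵥ Ahat.mulVec (x - muHat) - (x - μ) ⬝ᵥ A.mulVec (x - μ)|
        = |(x - muHat) ⬝ᵥ (Ahat - A).mulVec (x - muHat)
            + ((μ - muHat) ⬝ᵥ A.mulVec (x - muHat)
              + (μ - muHat) ⬝ᵥ A.mulVec (x - μ))| := by
          refine congrArg abs ?_
          rw [show (μ - muHat) ⬝ᵥ A.mulVec (x - μ)
              = (x - μ) ⬝ᵥ A.mulVec (μ - muHat) from ?_]
          · exact split2 A Ahat _ _ _ (by simp only [WithLp.ofLp_sub]; abel)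
          · rw [Matrix.dotProduct_mulVec, ← Matrix.mulVec_transpose, hA_symm]
            exact dotProduct_comm _ _
      _ ≤ |(x - muHat) ⬝ᵥ (Ahat - A).mulVec (x - muHat)|
            + (|(μ - muHat) ⬝ᵥ A.mulVec (x - muHat)|
              + |(μ - muHat) ⬝ᵥ A.mulVec (x - μ)|) :=
          (abs_add_le _ _).trans (add_le_add_right (abs_add_le _ _) _)
      _ ≤ frobNorm (Ahat - A) * ‖x - muHat‖ ^ 2
            + (L * (‖muHat - μ‖ * ‖x - muHat‖) + L * (‖muHat - μ‖ * ‖x - μ‖)) := by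
          refine add_le_add h1 (add_le_add h2 ?_)
          calc |(μ - muHat) ⬝ᵥ A.mulVec (x - μ)| ≤ L * (‖μ - muHat‖ * ‖x - μ‖) :=
                eig_bound hA_symm hA (μ - muHat) (x - μ)
            _ = L * (‖muHat - μ‖ * ‖x - μ‖) := by rw [e1]
      _ ≤ frobNorm (Ahat - A) * ‖x - muHat‖ ^ 2
            + L * ‖muHat - μ‖ * (2 * ‖x‖ + ‖muHat‖ + ‖μ‖) := by
          have hb1 : ‖x - muHat‖ ≤ ‖x‖ + ‖muHat‖ := norm_sub_le _ _
          have hb2 : ‖x - μ‖ ≤ ‖x‖ + ‖μ‖ := norm_sub_le _ _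
          have hLn : 0 ≤ L * ‖muHat - μ‖ := mul_nonneg hL0 (norm_nonneg _)
          nlinarith [mul_le_mul_of_nonneg_left hb1 hLn, mul_le_mul_of_nonneg_left hb2 hLn]
  · rw [Matrix.dotProduct_mulVec, ← Matrix.mulVec_transpose, hA_symm]
    exact dotProduct_comm _ _
end
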